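/- Let G be a graph such that for every positive definite matrix A with zeros at the non-edges of G and for every subgraph H of G, the thresholded matrix A_H is positive definite. Then G contains no cycle, i.e., G is a forest. -/

import Mathlib

open Finset Matrix

namespace Stmt13Aux

lemma quad_vecMulVec {m : Type*} [Fintype m] (p q x : m → ℝ) :
    x ⬝ᵥ (Matrix.vecMulVec p q *ᵥ x) = (p ⬝ᵥ x) * (q ⬝ᵥ x) := by
  simp only [dotProduct, Matrix.mulVec, Matrix.vecMulVec_apply]
  rw [Finset.sum_mul_sum]
  exact Finset.sum_congr rfl fun a _ => by
    rw [Finset.mul_sum]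
    exact Finset.sum_congr rfl fun b _ => by ring

lemma sum_mulVec' {m ι : Type*} [Fintype m] (s : Finset ι) (M : ι → Matrix m m ℝ) (x : m → ℝ) :
    (∑ i ∈ s, M i) *ᵥ x = ∑ i ∈ s, (M i *ᵥ x) := by
  ext a
  simp only [Matrix.mulVec, dotProduct, Matrix.sum_apply, Finset.sum_apply, Finset.sum_mul]
  rw [Finset.sum_comm]

lemma dot_sum' {m ι : Type*} [Fintype m] (s : Finset ι) (y : ι → m → ℝ) (x : m → ℝ) :
    x ⬝ᵥ (∑ i ∈ s, y i) = ∑ i ∈ s, x ⬝ᵥ y i := by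
  simp only [dotProduct, Finset.sum_apply, Finset.mul_sum]
  rw [Finset.sum_comm]

lemma getVert_support {V : Type*} {G : SimpleGraph V} {a b : V}
    (p : G.Walk a b) (i : ℕ) (hi : i < p.support.length) : p.getVert i = p.support[i] := by
  induction p generalizing i with
  | nil =>
    simp only [SimpleGraph.Walk.support_nil, List.length_singleton] at hi
    obtain rfl : i = 0 := by omega
    rfl
  | cons h q ih =>
    cases i with
    | zero => rfl
    | succ j =>
      rw [SimpleGraph.Walk.getVert_cons_succ]
      simp only [SimpleGraph.Walk.support_cons] at hi ⊢
      rw [List.getElem_cons_succ]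
      exact ih j (by simpa using hi)

end Stmt13Aux

def threshold {n : ℕ} (G : SimpleGraph (Fin n)) [DecidableRel G.Adj]
    (A : Matrix (Fin n) (Fin n) ℝ) : Matrix (Fin n) (Fin n) ℝ :=
  Matrix.of fun i j => if i = j ∨ G.Adj i j then A i j else 0

/-- If thresholding with respect to every subgraph `H ≤ G` preserves positive
definiteness of every positive definite matrix with zeros at the non-edges of `G`,
then `G` is a forest. -/
theorem stmt_13 {n : ℕ} (G : SimpleGraph (Fin n)) [DecidableRel G.Adj]
    (h : ∀ A : Matrix (Fin n) (Fin n) ℝ, A.PosDef →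
      (∀ i j : Fin n, i ≠ j → ¬ G.Adj i j → A i j = 0) →
      ∀ (H : SimpleGraph (Fin n)) (_ : DecidableRel H.Adj), H ≤ G →
        (@threshold n H ‹_› A).PosDef) :
    G.IsAcyclic := by
  by_contra hcyc
  unfold SimpleGraph.IsAcyclic at hcyc
  push_neg at hcyc
  obtain ⟨x₀, p, hp⟩ := hcyc
  obtain ⟨m, hlen⟩ : ∃ m, p.length = m + 3 :=
    ⟨p.length - 3, by have := hp.three_le_length; omega⟩
  set v : ℕ → Fin n := p.getVert with hv
  have hadj : ∀ i, i < m + 3 → G.Adj (v i) (v (i + 1)) :=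
    fun i hi => p.adj_getVert_succ (by omega)
  have hv0 : v 0 = x₀ := p.getVert_zero
  have hvk : v (m + 3) = v 0 := by
    rw [hv0, hv, ← hlen]; exact p.getVert_length
  have hvk' : v (m + 2 + 1) = v 0 := hvk
  -- support indexing
  have hsl : p.support.length = m + 3 + 1 := by
    rw [SimpleGraph.Walk.length_support, hlen]
  have htail : ∀ j (hj : j < m + 3), v (j + 1) = p.support.tail[j]'(by
      rw [List.length_tail, hsl]; omega) := by
    intro j hj
    have h1 : v (j + 1) = p.support[j + 1]'(by rw [hsl]; omega) :=
      Stmt13Aux.getVert_support p (j + 1) (by rw [hsl]; omega)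
    rw [h1, List.getElem_tail]
  have hnd : p.support.tail.Nodup := hp.support_nodup
  have hinj : ∀ i, i < m + 3 → ∀ j, j < m + 3 → v i = v j → i = j := by
    have key : ∀ i j, i < m + 3 → j < m + 3 → v (i + 1) = v (j + 1) → i = j := by
      intro i j hi hj hij
      rw [htail i hi, htail j hj] at hij
      exact hnd.getElem_inj_iff.1 hij
    intro i hi j hj hij
    match i, j with
    | 0, 0 => rfl
    | 0, j + 1 =>
      exfalso
      have : v (m + 2 + 1) = v (j + 1) := by rw [hvk']; exact hij
      have := key (m + 2) j (by omega) (by omega) this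
      omega
    | i + 1, 0 =>
      exfalso
      have : v (i + 1) = v (m + 2 + 1) := by rw [hvk']; exact hij
      have := key i (m + 2) (by omega) (by omega) this
      omega
    | i + 1, j + 1 =>
      have := key i j (by omega) (by omega) hij
      omega
  have hvne : ∀ i j, i < m + 3 → j < m + 3 → i ≠ j → v i ≠ v j :=
    fun i j hi hj hij hh => hij (hinj i hi j hj hh)
  -- the constants
  set d : ℝ := 1 / (2 * ((m : ℝ) + 2)) with hd
  set δ : ℝ := 1 / (2 * ((m : ℝ) + 3) * ((m : ℝ) + 2)) with hδ
  have hdpos : 0 < d := by rw [hd]; positivity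
  have hδpos : 0 < δ := by rw [hδ]; positivity
  -- vectors
  set ind : Fin n → Fin n → ℝ := fun c a => if a = c then 1 else 0 with hind
  set w : ℕ → Fin n → ℝ := fun i a => ind (v i) a - ind (v (i + 1)) a with hw
  have hdot : ∀ (c : Fin n) (x : Fin n → ℝ), ind c ⬝ᵥ x = x c := by
    intro c x
    simp [hind, dotProduct, ite_mul]
  have hdotw : ∀ i (x : Fin n → ℝ), w i ⬝ᵥ x = x (v i) - x (v (i + 1)) := by
    intro i x
    have h1 : w i ⬝ᵥ x = ind (v i) ⬝ᵥ x - ind (v (i + 1)) ⬝ᵥ x := by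
      simp [hw, dotProduct, sub_mul, Finset.sum_sub_distrib]
    rw [h1, hdot, hdot]
  -- the matrix
  set A : Matrix (Fin n) (Fin n) ℝ :=
    δ • (1 : Matrix (Fin n) (Fin n) ℝ)
      + (∑ i ∈ Finset.range (m + 2), Matrix.vecMulVec (w i) (w i))
      + (-d) • Matrix.vecMulVec (w (m + 2)) (w (m + 2)) with hA
  have hAapp : ∀ a b, A a b = δ * (if a = b then 1 else 0)
      + (∑ i ∈ Finset.range (m + 2), w i a * w i b)
      - d * (w (m + 2) a * w (m + 2) b) := by
    intro a b
    rw [hA]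
    simp [Matrix.add_apply, Matrix.smul_apply, Matrix.one_apply, Matrix.sum_apply,
      Matrix.vecMulVec_apply, smul_eq_mul, sub_eq_add_neg, mul_comm]
  have hAsymm : ∀ a b, A a b = A b a := by
    intro a b
    rw [hAapp, hAapp]
    have h1 : (if a = b then (1:ℝ) else 0) = (if b = a then 1 else 0) := by
      simp [eq_comm]
    have h2 : (∑ i ∈ Finset.range (m + 2), w i a * w i b)
        = ∑ i ∈ Finset.range (m + 2), w i b * w i a :=
      Finset.sum_congr rfl fun i _ => mul_comm _ _
    rw [h1, h2]; ring
  have hAherm : A.IsHermitian := by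
    ext a b
    rw [Matrix.conjTranspose_apply, star_trivial]
    exact hAsymm b a
  have hform : ∀ x : Fin n → ℝ, x ⬝ᵥ (A *ᵥ x) =
      δ * (x ⬝ᵥ x) + (∑ i ∈ Finset.range (m + 2), (w i ⬝ᵥ x) ^ 2)
        - d * (w (m + 2) ⬝ᵥ x) ^ 2 := by
    intro x
    rw [hA, Matrix.add_mulVec, Matrix.add_mulVec, dotProduct_add, dotProduct_add,
      Matrix.smul_mulVec, Matrix.one_mulVec, dotProduct_smul,
      Matrix.smul_mulVec, dotProduct_smul,
      Stmt13Aux.sum_mulVec', Stmt13Aux.dot_sum']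
    have h1 : ∀ i ∈ Finset.range (m+2), x ⬝ᵥ (Matrix.vecMulVec (w i) (w i) *ᵥ x) = (w i ⬝ᵥ x)^2 := by
      intro i _
      rw [Stmt13Aux.quad_vecMulVec]; ring
    rw [Finset.sum_congr rfl h1, Stmt13Aux.quad_vecMulVec]
    simp only [smul_eq_mul]
    ring
  have hApd : A.PosDef := by
    refine Matrix.PosDef.of_dotProduct_mulVec_pos hAherm fun x hx => ?_
    have hsx : star x = x := funext fun a => by rw [Pi.star_apply, star_trivial]
    rw [hsx, hform x]
    have h1 : w (m + 2) ⬝ᵥ x = -(∑ i ∈ Finset.range (m + 2), w i ⬝ᵥ x) := by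
      have h2 : ∑ i ∈ Finset.range (m + 2), w i ⬝ᵥ x
          = ∑ i ∈ Finset.range (m + 2), (x (v i) - x (v (i + 1))) :=
        Finset.sum_congr rfl fun i _ => hdotw i x
      rw [hdotw, h2, Finset.sum_range_sub' (fun i => x (v i)), hvk']
      ring
    have hC : (w (m + 2) ⬝ᵥ x) ^ 2 ≤ ((m : ℝ) + 2) * ∑ i ∈ Finset.range (m + 2), (w i ⬝ᵥ x) ^ 2 := by
      rw [h1, neg_sq]
      have := sq_sum_le_card_mul_sum_sq (s := Finset.range (m + 2)) (f := fun i => w i ⬝ᵥ x)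
      simpa using this
    have hS0 : 0 ≤ ∑ i ∈ Finset.range (m + 2), (w i ⬝ᵥ x) ^ 2 :=
      Finset.sum_nonneg fun i _ => sq_nonneg _
    have hxx : 0 < x ⬝ᵥ x := by
      obtain ⟨a, ha⟩ : ∃ a, x a ≠ 0 := by
        by_contra hc; push_neg at hc; exact hx (funext hc)
      exact Finset.sum_pos' (fun i _ => mul_self_nonneg _)
        ⟨a, Finset.mem_univ a, mul_self_pos.2 ha⟩
    have hdm : d * ((m : ℝ) + 2) = 1 / 2 := by
      rw [hd]; field_simp
    have h3 : d * (w (m + 2) ⬝ᵥ x) ^ 2 ≤ (1/2) * ∑ i ∈ Finset.range (m + 2), (w i ⬝ᵥ x) ^ 2 := by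
      calc d * (w (m + 2) ⬝ᵥ x) ^ 2
          ≤ d * (((m:ℝ)+2) * ∑ i ∈ Finset.range (m + 2), (w i ⬝ᵥ x) ^ 2) :=
            mul_le_mul_of_nonneg_left hC hdpos.le
        _ = (1/2) * ∑ i ∈ Finset.range (m + 2), (w i ⬝ᵥ x) ^ 2 := by rw [← mul_assoc, hdm]
    nlinarith [mul_pos hδpos hxx]
  have hsupport : ∀ a b : Fin n, a ≠ b → ¬ G.Adj a b → A a b = 0 := by
    intro a b hab hnadj
    have hterm : ∀ i, i < m + 3 → w i a * w i b = 0 := by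
      intro i hi
      by_contra hmul
      have hmemc : ∀ c : Fin n, w i c ≠ 0 → c = v i ∨ c = v (i + 1) := by
        intro c hc
        by_contra hcc
        push_neg at hcc
        apply hc
        simp [hw, hind, hcc.1, hcc.2]
      have hadj' := hadj i hi
      rcases hmemc a (left_ne_zero_of_mul hmul) with ha | ha <;>
        rcases hmemc b (right_ne_zero_of_mul hmul) with hb | hb
      · exact hab (ha.trans hb.symm)
      · exact hnadj (by rw [ha, hb]; exact hadj')
      · exact hnadj (by rw [ha, hb]; exact hadj'.symm)
      · exact hab (ha.trans hb.symm)
    rw [hAapp, if_neg hab,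
      Finset.sum_eq_zero (fun i hi => hterm i (by have := Finset.mem_range.1 hi; omega)),
      hterm (m + 2) (by omega)]
    ring
  -- the subgraph H
  have hGadj0 : G.Adj (v (m + 2)) (v 0) := by
    have := hadj (m + 2) (by omega)
    rwa [hvk'] at this
  have hne0 : v (m + 2) ≠ v 0 := hGadj0.ne
  set H : SimpleGraph (Fin n) := G.deleteEdges {s(v (m + 2), v 0)} with hH
  haveI instH : DecidableRel H.Adj := Classical.decRel _
  have hHle : H ≤ G := SimpleGraph.deleteEdges_le _
  have hHadj : ∀ a b : Fin n, H.Adj a b ↔ G.Adj a b ∧ s(a, b) ≠ s(v (m + 2), v 0) := by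
    intro a b; rw [hH]; simp [SimpleGraph.deleteEdges_adj]
  have hT := h A hApd hsupport H instH hHle
  -- corner values
  have hw1 : w (m + 2) (v (m + 2)) = 1 := by
    have h1 : v (m + 2) ≠ v (m + 2 + 1) := by rw [hvk']; exact hne0
    simp [hw, hind, h1]
  have hw2 : w (m + 2) (v 0) = -1 := by
    have h1 : v 0 ≠ v (m + 2) := hne0.symm
    simp [hw, hind, h1, hvk']
  have hAcorner : A (v (m + 2)) (v 0) = d := by
    have hzero : ∀ i ∈ Finset.range (m + 2), w i (v (m + 2)) * w i (v 0) = 0 := by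
      intro i hi
      rw [Finset.mem_range] at hi
      by_cases him : i = m + 1
      · subst him
        have h1 : v 0 ≠ v (m + 1) := hvne 0 (m + 1) (by omega) (by omega) (by omega)
        have h2 : v 0 ≠ v (m + 1 + 1) := hne0.symm
        have hz : w (m + 1) (v 0) = 0 := by simp [hw, hind, h1, h2]
        rw [hz, mul_zero]
      · have h1 : v (m + 2) ≠ v i := hvne (m + 2) i (by omega) (by omega) (by omega)
        have h2 : v (m + 2) ≠ v (i + 1) := hvne (m + 2) (i + 1) (by omega) (by omega) (by omega)
        have hz : w i (v (m + 2)) = 0 := by simp [hw, hind, h1, h2]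
        rw [hz, zero_mul]
    rw [hAapp, if_neg hne0, Finset.sum_eq_zero hzero, hw1, hw2]
    ring
  have hAcorner' : A (v 0) (v (m + 2)) = d := by rw [hAsymm]; exact hAcorner
  -- the correction matrix E
  set E : Matrix (Fin n) (Fin n) ℝ :=
    (-d) • (Matrix.vecMulVec (ind (v (m + 2))) (ind (v 0))
      + Matrix.vecMulVec (ind (v 0)) (ind (v (m + 2)))) with hE
  have hEapp : ∀ a b, E a b
      = -(d * (ind (v (m + 2)) a * ind (v 0) b + ind (v 0) a * ind (v (m + 2)) b)) := by
    intro a b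
    rw [hE]
    simp only [Matrix.smul_apply, Matrix.add_apply, Matrix.vecMulVec_apply, smul_eq_mul]
    ring
  have hEzero : ∀ a b : Fin n, ¬((a = v (m + 2) ∧ b = v 0) ∨ (a = v 0 ∧ b = v (m + 2))) →
      E a b = 0 := by
    intro a b hab
    have h1 : ind (v (m + 2)) a * ind (v 0) b = 0 := by
      by_cases ha : a = v (m + 2)
      · have hb : b ≠ v 0 := fun hb => hab (Or.inl ⟨ha, hb⟩)
        simp [hind, hb]
      · simp [hind, ha]
    have h2 : ind (v 0) a * ind (v (m + 2)) b = 0 := by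
      by_cases ha : a = v 0
      · have hb : b ≠ v (m + 2) := fun hb => hab (Or.inr ⟨ha, hb⟩)
        simp [hind, hb]
      · simp [hind, ha]
    rw [hEapp, h1, h2]
    ring
  have hEc1 : E (v (m + 2)) (v 0) = -d := by
    rw [hEapp]
    simp [hind, hne0, hne0.symm]
  have hEc2 : E (v 0) (v (m + 2)) = -d := by
    rw [hEapp]
    simp [hind, hne0, hne0.symm]
  -- threshold identity
  have hTA : @threshold n H instH A = A + E := by
    ext a b
    show (if a = b ∨ H.Adj a b then A a b else 0) = A a b + E a b
    by_cases hab : a = b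
    · subst hab
      rw [if_pos (Or.inl rfl), hEzero a a (by
        rintro (⟨h1, h2⟩ | ⟨h1, h2⟩)
        · exact hne0 (h1.symm.trans h2)
        · exact hne0 (h2.symm.trans h1))]
      ring
    · by_cases hHab : H.Adj a b
      · rw [if_pos (Or.inr hHab)]
        have hEz : E a b = 0 := by
          apply hEzero
          rintro (⟨h1, h2⟩ | ⟨h1, h2⟩)
          · exact ((hHadj a b).1 hHab).2 (by rw [h1, h2])
          · exact ((hHadj a b).1 hHab).2 (by rw [h1, h2, Sym2.eq_swap])
        rw [hEz]; ring
      · rw [if_neg (by tauto)]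
        by_cases hGab : G.Adj a b
        · have hsym : s(a, b) = s(v (m + 2), v 0) := by
            by_contra hs
            exact hHab ((hHadj a b).2 ⟨hGab, hs⟩)
          rcases Sym2.eq_iff.1 hsym with ⟨h1, h2⟩ | ⟨h1, h2⟩
          · rw [h1, h2, hAcorner, hEc1]; ring
          · rw [h1, h2, hAcorner', hEc2]; ring
        · rw [hsupport a b hab hGab]
          have hEz : E a b = 0 := by
            apply hEzero
            rintro (⟨h1, h2⟩ | ⟨h1, h2⟩)
            · exact hGab (by rw [h1, h2]; exact hGadj0)
            · exact hGab (by rw [h1, h2]; exact hGadj0.symm)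
          rw [hEz]; ring
  -- the witness vector
  set t : Fin n → ℝ := fun a => if a ∈ Finset.image v (Finset.range (m + 3)) then 1 else 0 with ht
  have htv : ∀ i, i ≤ m + 3 → t (v i) = 1 := by
    intro i hi
    rcases Nat.lt_or_ge i (m + 3) with hlt | hge
    · have hmem : v i ∈ Finset.image v (Finset.range (m + 3)) :=
        Finset.mem_image.2 ⟨i, Finset.mem_range.2 hlt, rfl⟩
      show (if v i ∈ Finset.image v (Finset.range (m + 3)) then (1:ℝ) else 0) = 1
      rw [if_pos hmem]
    · have hik : i = m + 3 := by omega
      subst hik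
      rw [hvk]
      have hmem : v 0 ∈ Finset.image v (Finset.range (m + 3)) :=
        Finset.mem_image.2 ⟨0, Finset.mem_range.2 (by omega), rfl⟩
      show (if v 0 ∈ Finset.image v (Finset.range (m + 3)) then (1:ℝ) else 0) = 1
      rw [if_pos hmem]
  have htne : t ≠ 0 := by
    intro hzero
    have h1 : t (v 0) = 1 := htv 0 (by omega)
    rw [hzero] at h1
    simp at h1
  have htt : t ⬝ᵥ t = ((m : ℝ) + 3) := by
    have hcard : (Finset.image v (Finset.range (m + 3))).card = m + 3 := by
      rw [Finset.card_image_of_injOn, Finset.card_range]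
      intro i hi j hj hij
      exact hinj i (Finset.mem_range.1 hi) j (Finset.mem_range.1 hj) hij
    have h1 : t ⬝ᵥ t
        = ∑ a : Fin n, (if a ∈ Finset.image v (Finset.range (m + 3)) then (1:ℝ) else 0) := by
      simp only [dotProduct, ht]
      exact Finset.sum_congr rfl fun a _ => by split_ifs <;> ring
    rw [h1, Finset.sum_ite_mem, Finset.univ_inter, Finset.sum_const, hcard, nsmul_eq_mul, mul_one]
    push_cast
    ring
  have hwt : ∀ i, i ≤ m + 2 → w i ⬝ᵥ t = 0 := by
    intro i hi
    rw [hdotw, htv i (by omega), htv (i + 1) (by omega)]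
    ring
  have hformT : t ⬝ᵥ ((@threshold n H instH A) *ᵥ t) = -d := by
    rw [hTA, Matrix.add_mulVec, dotProduct_add, hform t]
    have hEt : t ⬝ᵥ (E *ᵥ t) = -(2 * d) := by
      rw [hE, Matrix.smul_mulVec, dotProduct_smul, Matrix.add_mulVec, dotProduct_add,
        Stmt13Aux.quad_vecMulVec, Stmt13Aux.quad_vecMulVec, hdot, hdot,
        htv (m + 2) (by omega), htv 0 (by omega)]
      simp only [smul_eq_mul]
      ring
    rw [hEt, Finset.sum_eq_zero (fun i hi => by
        rw [hwt i (by have := Finset.mem_range.1 hi; omega)]; ring),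
      hwt (m + 2) le_rfl, htt, hδ, hd]
    field_simp
    ring
  have hpos := hT.dotProduct_mulVec_pos htne
  have hsx : star t = t := funext fun a => by rw [Pi.star_apply, star_trivial]
  rw [hsx, hformT] at hpos
  linarith [hdpos]
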